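/- Let T : ℝᵈ → ℝᵈ be an invertible linear map with ‖T⁻¹‖ < 1, let δ > 0, and for x ∈ ℝᵈ and k ∈ ℕ define the dynamical basis set B_k(x) = T⁻ᵏ(closedBall(Tᵏx, δ)), i.e. B_k(x) = {x + T⁻ᵏv : ‖v‖ ≤ δ}. Then for every Lebesgue-measurable set S ⊆ ℝᵈ, Lebesgue-almost every x ∈ S satisfies m(B_k(x) ∩ S)/m(B_k(x)) → 1 as k → ∞, where m denotes Lebesgue measure on ℝᵈ; that is, almost every point of S is a dynamical density point of S. -/

import Mathlib

set_option linter.unusedSectionVars false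

open MeasureTheory Filter Topology

section DynDensityAux

open Set Metric Pointwise
open scoped ENNReal NNReal

variable {V : Type*} [NormedAddCommGroup V] [NormedSpace ℝ V]
  [MeasurableSpace V] [BorelSpace V] [SecondCountableTopology V] [ProperSpace V]
  (μ : Measure V) [IsLocallyFiniteMeasure μ] [μ.IsAddLeftInvariant]

/-- convex symmetric combination lemma -/
theorem DynDensity.sub3_mem_smul {s : Set V} (hs : Convex ℝ s) (hsym : ∀ v ∈ s, -v ∈ s)
    {u v w : V} (hu : u ∈ s) (hv : v ∈ s) (hw : w ∈ s) : u + v - w ∈ (3:ℝ) • s := by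
  have hq : (1/2:ℝ) • u + (1/2:ℝ) • v ∈ s := hs hu hv (by norm_num) (by norm_num) (by norm_num)
  have hp : (2/3:ℝ) • ((1/2:ℝ) • u + (1/2:ℝ) • v) + (1/3:ℝ) • (-w) ∈ s :=
    hs hq (hsym w hw) (by norm_num) (by norm_num) (by norm_num)
  refine ⟨_, hp, ?_⟩
  simp only [smul_add, smul_smul, smul_neg]
  module

/-- The Vitali-type covering theorem for a translation-invariant family of
closed sets `C k` with controlled enlargements `E k`. -/
theorem DynDensity.covering_aux
    (C : ℕ → Set V) (E : ℕ → Set V)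
    (hC_closed : ∀ k, IsClosed (C k))
    (hC_int : ∀ k, (interior (C k)).Nonempty)
    (hC0 : ∀ k, (0:V) ∈ C k)
    (hE : ∀ (j k : ℕ), k ≤ j → ∀ x y : V,
        ((x +ᵥ C j) ∩ (y +ᵥ C k)).Nonempty → x +ᵥ C j ⊆ y +ᵥ E k)
    (K : ℝ≥0∞) (hKtop : K ≠ ∞) (hK : ∀ k, μ (E k) ≤ K * μ (C k))
    {ι : Type*} (t : Set ι) (c : ι → V) (n : ι → ℕ) (B : ι → Set V)
    (hBdef : ∀ a ∈ t, B a = c a +ᵥ C (n a))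
    (s : Set V)
    (hf : ∀ x ∈ s, ∀ ε > (0:ℝ), ∃ a ∈ t, B a ⊆ closedBall x ε ∧ c a = x) :
    ∃ u ⊆ t, u.Countable ∧ u.PairwiseDisjoint B ∧ μ (s \ ⋃ a ∈ u, B a) = 0 := by
  classical
  have hBclosed : ∀ a ∈ t, IsClosed (B a) := fun a ha => by
    rw [hBdef a ha]; exact (hC_closed (n a)).vadd (c a)
  have hBint : ∀ a ∈ t, (interior (B a)).Nonempty := fun a ha => by
    rw [hBdef a ha, interior_vadd]; exact (hC_int (n a)).vadd_set
  have hcB : ∀ a ∈ t, c a ∈ B a := fun a ha => by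
    rw [hBdef a ha]; exact mem_vadd_set.mpr ⟨0, hC0 _, add_zero _⟩
  have hμB : ∀ a ∈ t, μ (B a) = μ (C (n a)) := fun a ha => by
    rw [hBdef a ha, measure_vadd]
  -- restrict to small sets
  let t' := { a ∈ t | B a ⊆ closedBall (c a) 1 }
  -- abstract Vitali subfamily
  obtain ⟨u, ut', u_disj, hu⟩ : ∃ u ⊆ t', u.PairwiseDisjoint B ∧
      ∀ a ∈ t', ∃ b ∈ u, (B a ∩ B b).Nonempty ∧
        ((2:ℝ)⁻¹)^(n a) ≤ (3/2) * ((2:ℝ)⁻¹)^(n b) := by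
    apply Vitali.exists_disjoint_subfamily_covering_enlargement B t'
        (fun a => ((2:ℝ)⁻¹)^(n a)) (3/2) (by norm_num)
        (fun a _ => by positivity) 1
        (fun a _ => pow_le_one₀ (by norm_num) (by norm_num))
        (fun a ha => ⟨c a, hcB a ha.1⟩)
  have hn : ∀ a b : ι, ((2:ℝ)⁻¹)^(n a) ≤ (3/2) * ((2:ℝ)⁻¹)^(n b) → n b ≤ n a := by
    intro a b h
    by_contra hlt
    push_neg at hlt
    have h1 : ((2:ℝ)⁻¹)^(n b) ≤ ((2:ℝ)⁻¹)^(n a + 1) :=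
      pow_le_pow_of_le_one (by norm_num) (by norm_num) hlt
    rw [pow_succ] at h1
    nlinarith [pow_pos (show (0:ℝ) < 2⁻¹ by norm_num) (n a),
      pow_pos (show (0:ℝ) < 2⁻¹ by norm_num) (n b)]
  have ut : u ⊆ t := fun a ha => (ut' ha).1
  have u_count : u.Countable :=
    u_disj.countable_of_nonempty_interior fun a ha => hBint a (ut ha)
  refine ⟨u, ut, u_count, u_disj, ?_⟩
  refine measure_null_of_locally_null _ fun x _ => ?_
  -- the subfamily near x
  let v := { a ∈ u | (B a ∩ ball x 1).Nonempty }
  have vu : v ⊆ u := fun a ha => ha.1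
  have hBsub : ∀ a ∈ v, B a ⊆ closedBall x 3 := by
    rintro a ⟨au, p, pB, px⟩
    have h1 : B a ⊆ closedBall (c a) 1 := (ut' au).2
    have hd : dist (c a) x ≤ 2 := by
      have hpc : dist p (c a) ≤ 1 := h1 pB
      have hpx : dist p x ≤ 1 := (mem_ball.1 px).le
      calc dist (c a) x ≤ dist (c a) p + dist p x := dist_triangle _ _ _
        _ ≤ 2 := by rw [dist_comm (c a) p]; linarith
    exact h1.trans (closedBall_subset_closedBall' (by linarith))
  haveI : Countable v := (u_count.mono vu).to_subtype
  have I : (∑' a : v, μ (B a)) < ∞ := by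
    calc (∑' a : v, μ (B a)) = μ (⋃ a ∈ v, B a) := by
          rw [measure_biUnion (u_count.mono vu) (u_disj.subset vu)
            fun a ha => (hBclosed a (ut (vu ha))).measurableSet]
      _ ≤ μ (closedBall x 3) := measure_mono (iUnion₂_subset hBsub)
      _ < ∞ := (isCompact_closedBall x 3).measure_lt_top
  refine ⟨_ ∩ ball x 1, inter_mem_nhdsWithin _ (ball_mem_nhds _ one_pos),
    nonpos_iff_eq_zero.mp (le_of_forall_gt_imp_ge_of_dense fun ε εpos => ?_)⟩
  obtain ⟨w, hw⟩ : ∃ w : Finset v, (∑' a : { a : v // a ∉ w }, μ (B (a:ι))) < ε / K := by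
    have hpos : (0:ℝ≥0∞) < ε / K := ENNReal.div_pos εpos.ne' hKtop
    exact ((tendsto_order.1 (ENNReal.tendsto_tsum_compl_atTop_zero I.ne)).2 _ hpos).exists
  have M : (s \ ⋃ a ∈ u, B a) ∩ ball x 1 ⊆
      ⋃ a : { a : v // a ∉ w }, (c (a:ι) +ᵥ E (n (a:ι))) := by
    intro z hz
    set k := ⋃ (a : v) (_ : a ∈ w), B (a:ι) with hkdef
    have k_closed : IsClosed k := isClosed_biUnion_finset fun i _ => hBclosed _ (ut (vu i.2))
    have z_notmem_k : z ∉ k := by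
      intro hzk
      simp only [k, mem_iUnion] at hzk
      obtain ⟨a, _, hza⟩ := hzk
      exact hz.1.2 (mem_biUnion (vu a.2) hza)
    have hnz : ball x 1 \ k ∈ 𝓝 z :=
      (isOpen_ball.sdiff k_closed).mem_nhds ⟨hz.2, z_notmem_k⟩
    obtain ⟨dd, dpos, hdd⟩ : ∃ dd, 0 < dd ∧ closedBall z dd ⊆ ball x 1 \ k :=
      nhds_basis_closedBall.mem_iff.1 hnz
    obtain ⟨a, hat, aB, ac⟩ := hf z hz.1.1 (min dd 1) (lt_min dpos one_pos)
    have hat' : a ∈ t' := ⟨hat, by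
      rw [ac]; exact aB.trans (closedBall_subset_closedBall (min_le_right _ _))⟩
    have hBa_sub : B a ⊆ ball x 1 \ k :=
      aB.trans ((closedBall_subset_closedBall (min_le_left _ _)).trans hdd)
    obtain ⟨b, bu, ab, bn⟩ := hu a hat'
    have hnb : n b ≤ n a := hn a b bn
    have hBb : B a ⊆ c b +ᵥ E (n b) := by
      rw [hBdef a hat]
      apply hE (n a) (n b) hnb
      rw [← hBdef a hat, ← hBdef b (ut bu)]
      exact ab
    have bv : b ∈ v := by
      refine ⟨bu, ?_⟩
      obtain ⟨p, pa, pb⟩ := ab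
      exact ⟨p, pb, (hBa_sub pa).1⟩
    have b_notmem_w : (⟨b, bv⟩ : v) ∉ w := by
      intro hbw
      have hbk : B b ⊆ k :=
        Finset.subset_set_biUnion_of_mem (f := fun y : v => B (y:ι)) (x := ⟨b, bv⟩) hbw
      obtain ⟨p, pa, pb⟩ := ab
      exact (hBa_sub pa).2 (hbk pb)
    have zBa : z ∈ B a := ac ▸ hcB a hat
    exact mem_iUnion.2 ⟨⟨⟨b, bv⟩, b_notmem_w⟩, hBb zBa⟩
  calc
    μ ((s \ ⋃ a ∈ u, B a) ∩ ball x 1)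
        ≤ μ (⋃ a : { a : v // a ∉ w }, (c (a:ι) +ᵥ E (n (a:ι)))) := measure_mono M
    _ ≤ ∑' a : { a : v // a ∉ w }, μ (c (a:ι) +ᵥ E (n (a:ι))) := measure_iUnion_le _
    _ = ∑' a : { a : v // a ∉ w }, μ (E (n (a:ι))) := by simp_rw [measure_vadd]
    _ ≤ ∑' a : { a : v // a ∉ w }, K * μ (C (n (a:ι))) :=
        ENNReal.tsum_le_tsum fun a => hK _
    _ = K * ∑' a : { a : v // a ∉ w }, μ (C (n (a:ι))) := ENNReal.tsum_mul_left
    _ = K * ∑' a : { a : v // a ∉ w }, μ (B (a:ι)) := by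
        congr 1
        exact tsum_congr fun a => (hμB _ (ut (vu a.1.2))).symm
    _ ≤ K * (ε / K) := by gcongr
    _ ≤ ε := ENNReal.mul_div_le

/-- The Vitali family made of the translates of the sets `C k`. -/
noncomputable def DynDensity.vitaliFamily
    (C : ℕ → Set V) (E : ℕ → Set V) (r : ℕ → ℝ)
    (hC_closed : ∀ k, IsClosed (C k))
    (hC_int : ∀ k, (interior (C k)).Nonempty)
    (hC0 : ∀ k, (0:V) ∈ C k)
    (hCr : ∀ k, C k ⊆ closedBall 0 (r k))
    (hr : Tendsto r atTop (𝓝 0))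
    (hE : ∀ (j k : ℕ), k ≤ j → ∀ x y : V,
        ((x +ᵥ C j) ∩ (y +ᵥ C k)).Nonempty → x +ᵥ C j ⊆ y +ᵥ E k)
    (K : ℝ≥0∞) (hKtop : K ≠ ∞) (hK : ∀ k, μ (E k) ≤ K * μ (C k)) :
    VitaliFamily μ where
  setsAt x := Set.range (fun k => x +ᵥ C k)
  measurableSet x a ha := by
    obtain ⟨k, rfl⟩ := ha
    exact ((hC_closed k).vadd x).measurableSet
  nonempty_interior x a ha := by
    obtain ⟨k, rfl⟩ := ha
    rw [interior_vadd]
    exact (hC_int k).vadd_set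
  nontrivial x ε εpos := by
    obtain ⟨k, hk⟩ : ∃ k, r k < ε := (hr.eventually (gt_mem_nhds εpos)).exists
    refine ⟨x +ᵥ C k, ⟨k, rfl⟩, ?_⟩
    refine (vadd_set_mono (hCr k)).trans ?_
    rw [vadd_closedBall, vadd_eq_add, add_zero]
    exact closedBall_subset_closedBall hk.le
  covering := by
    intro s f fsub ffine
    classical
    let t : Set (V × Set V) := {p | p.1 ∈ s ∧ p.2 ∈ f p.1}
    let nn : V × Set V → ℕ := fun p =>
      if h : ∃ k, p.1 +ᵥ C k = p.2 then h.choose else 0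
    have hBdef : ∀ p ∈ t, p.2 = p.1 +ᵥ C (nn p) := by
      rintro p ⟨hps, hpf⟩
      obtain ⟨k, hk⟩ := fsub p.1 hps hpf
      have h : ∃ k, p.1 +ᵥ C k = p.2 := ⟨k, hk⟩
      simp only [nn, dif_pos h]
      exact h.choose_spec.symm
    obtain ⟨u, ut, _, u_disj, hμu⟩ :=
      DynDensity.covering_aux μ C E hC_closed hC_int hC0 hE K hKtop hK t
        (fun p => p.1) nn (fun p => p.2) hBdef s
        (fun x hx ε εpos => by
          obtain ⟨a, haf, hsub⟩ := ffine x hx ε εpos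
          exact ⟨(x, a), ⟨hx, haf⟩, hsub, rfl⟩)
    exact ⟨u, fun p hp => (ut hp).1, u_disj, fun p hp => (ut hp).2, hμu⟩

end DynDensityAux

open Set Metric Pointwise
open scoped ENNReal NNReal

/-- For an expanding invertible linear map `T` on `ℝᵈ` (i.e. `‖T⁻¹‖ < 1`) and the
dynamically defined basis `B k x = T⁻ᵏ (closedBall (Tᵏ x) δ)`, Lebesgue-almost every
point of a measurable set `S` is a dynamical density point of `S`. -/
theorem dynamical_density_points_full_measure
    {d : ℕ}
    (T : EuclideanSpace ℝ (Fin d) ≃L[ℝ] EuclideanSpace ℝ (Fin d))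
    (hT : ‖((T⁻¹ : EuclideanSpace ℝ (Fin d) ≃L[ℝ] EuclideanSpace ℝ (Fin d)) :
        EuclideanSpace ℝ (Fin d) →L[ℝ] EuclideanSpace ℝ (Fin d))‖ < 1)
    (δ : ℝ) (hδ : 0 < δ)
    (B : EuclideanSpace ℝ (Fin d) → ℕ → Set (EuclideanSpace ℝ (Fin d)))
    (hB : ∀ x k, B x k = (T⁻¹ ^ k) '' Metric.closedBall ((T ^ k) x) δ)
    (S : Set (EuclideanSpace ℝ (Fin d))) (hS : MeasurableSet S) :
    ∀ᵐ x ∂(volume : Measure (EuclideanSpace ℝ (Fin d))), x ∈ S →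
      Tendsto (fun k => volume (B x k ∩ S) / volume (B x k)) atTop (𝓝 1) := by
  classical
  set N : EuclideanSpace ℝ (Fin d) →L[ℝ] EuclideanSpace ℝ (Fin d) :=
    ((T⁻¹ : EuclideanSpace ℝ (Fin d) ≃L[ℝ] EuclideanSpace ℝ (Fin d)) :
      EuclideanSpace ℝ (Fin d) →L[ℝ] EuclideanSpace ℝ (Fin d)) with hN
  set lam : ℝ := ‖N‖ with hlam
  have hlam0 : (0:ℝ) ≤ lam := norm_nonneg _
  -- the basic convex bodies
  set Cs : ℕ → Set (EuclideanSpace ℝ (Fin d)) :=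
    fun k => ((T⁻¹ ^ k : EuclideanSpace ℝ (Fin d) ≃L[ℝ] EuclideanSpace ℝ (Fin d)) :
      EuclideanSpace ℝ (Fin d) → EuclideanSpace ℝ (Fin d)) '' Metric.closedBall 0 δ with hCs
  -- pointwise norm bound
  have hpt : ∀ (k : ℕ) (v : EuclideanSpace ℝ (Fin d)), ‖(T⁻¹ ^ k) v‖ ≤ lam ^ k * ‖v‖ := by
    intro k
    induction k with
    | zero => intro v; rw [pow_zero, pow_zero, one_mul]; exact le_of_eq rfl
    | succ m ih =>
      intro v
      rw [pow_succ' (T⁻¹ : EuclideanSpace ℝ (Fin d) ≃L[ℝ] EuclideanSpace ℝ (Fin d))]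
      show ‖T⁻¹ ((T⁻¹ ^ m) v)‖ ≤ lam ^ (m+1) * ‖v‖
      calc ‖T⁻¹ ((T⁻¹ ^ m) v)‖
          ≤ lam * ‖(T⁻¹ ^ m) v‖ := N.le_opNorm _
        _ ≤ lam * (lam ^ m * ‖v‖) := mul_le_mul_of_nonneg_left (ih v) hlam0
        _ = lam ^ (m+1) * ‖v‖ := by ring
  have hCr : ∀ k, Cs k ⊆ Metric.closedBall 0 (δ * lam ^ k) := by
    rintro k w ⟨v, hv, rfl⟩
    rw [Metric.mem_closedBall, dist_zero_right]
    have hvn : ‖v‖ ≤ δ := by rwa [Metric.mem_closedBall, dist_zero_right] at hv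
    calc ‖(T⁻¹ ^ k) v‖ ≤ lam ^ k * ‖v‖ := hpt k v
      _ ≤ lam ^ k * δ := mul_le_mul_of_nonneg_left hvn (pow_nonneg hlam0 _)
      _ = δ * lam ^ k := mul_comm _ _
  have hr0 : Tendsto (fun k => δ * lam ^ k) atTop (𝓝 0) := by
    have := (tendsto_pow_atTop_nhds_zero_of_lt_one hlam0 hT).const_mul δ
    simpa using this
  have hC_closed : ∀ k, IsClosed (Cs k) := fun k =>
    ((isCompact_closedBall (0 : EuclideanSpace ℝ (Fin d)) δ).image
      (T⁻¹ ^ k : EuclideanSpace ℝ (Fin d) ≃L[ℝ] EuclideanSpace ℝ (Fin d)).continuous).isClosed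
  have hC_int : ∀ k, (interior (Cs k)).Nonempty := by
    intro k
    have hopen : IsOpen (((T⁻¹ ^ k : EuclideanSpace ℝ (Fin d) ≃L[ℝ] EuclideanSpace ℝ (Fin d)) :
        EuclideanSpace ℝ (Fin d) → EuclideanSpace ℝ (Fin d)) '' Metric.ball 0 δ) :=
      (T⁻¹ ^ k : EuclideanSpace ℝ (Fin d) ≃L[ℝ]
        EuclideanSpace ℝ (Fin d)).toHomeomorph.isOpenMap _ Metric.isOpen_ball
    have hsub : ((T⁻¹ ^ k : EuclideanSpace ℝ (Fin d) ≃L[ℝ] EuclideanSpace ℝ (Fin d)) :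
        EuclideanSpace ℝ (Fin d) → EuclideanSpace ℝ (Fin d)) '' Metric.ball 0 δ ⊆ Cs k :=
      Set.image_mono Metric.ball_subset_closedBall
    have hne : (((T⁻¹ ^ k : EuclideanSpace ℝ (Fin d) ≃L[ℝ] EuclideanSpace ℝ (Fin d)) :
        EuclideanSpace ℝ (Fin d) → EuclideanSpace ℝ (Fin d)) '' Metric.ball 0 δ).Nonempty :=
      (Metric.nonempty_ball.2 hδ).image _
    exact hne.mono (interior_maximal hsub hopen)
  have hC0 : ∀ k, (0 : EuclideanSpace ℝ (Fin d)) ∈ Cs k := fun k =>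
    ⟨0, Metric.mem_closedBall_self hδ.le, map_zero _⟩
  have hC_conv : ∀ k, Convex ℝ (Cs k) := fun k =>
    (convex_closedBall (0 : EuclideanSpace ℝ (Fin d)) δ).is_linear_image
      ⟨fun a b => map_add _ a b, fun cc a => map_smul _ cc a⟩
  have hC_sym : ∀ k, ∀ v ∈ Cs k, -v ∈ Cs k := by
    rintro k v ⟨w, hw, rfl⟩
    refine ⟨-w, ?_, map_neg _ w⟩
    rwa [Metric.mem_closedBall, dist_zero_right, norm_neg, ← dist_zero_right,
      ← Metric.mem_closedBall]
  have hstep : ∀ k, Cs (k+1) ⊆ Cs k := by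
    intro k
    have h1 : Cs (k+1) = ((T⁻¹ ^ k : EuclideanSpace ℝ (Fin d) ≃L[ℝ] EuclideanSpace ℝ (Fin d)) :
        EuclideanSpace ℝ (Fin d) → EuclideanSpace ℝ (Fin d)) ''
        (((T⁻¹ : EuclideanSpace ℝ (Fin d) ≃L[ℝ] EuclideanSpace ℝ (Fin d)) :
          EuclideanSpace ℝ (Fin d) → EuclideanSpace ℝ (Fin d)) '' Metric.closedBall 0 δ) := by
      rw [hCs]
      simp only [pow_succ (T⁻¹ : EuclideanSpace ℝ (Fin d) ≃L[ℝ] EuclideanSpace ℝ (Fin d))]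
      rw [← Set.image_comp]
      rfl
    rw [h1]
    apply Set.image_mono
    rintro w ⟨v, hv, rfl⟩
    rw [Metric.mem_closedBall, dist_zero_right]
    have hvn : ‖v‖ ≤ δ := by rwa [Metric.mem_closedBall, dist_zero_right] at hv
    calc ‖T⁻¹ v‖ ≤ lam * ‖v‖ := N.le_opNorm v
      _ ≤ 1 * δ := mul_le_mul hT.le hvn (norm_nonneg _) zero_le_one
      _ = δ := one_mul δ
  have hC_mono : ∀ j k : ℕ, k ≤ j → Cs j ⊆ Cs k := fun j k hkj =>
    antitone_nat_of_succ_le hstep hkj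
  -- inverse identity
  have hinvpow : ∀ (k : ℕ) (x : EuclideanSpace ℝ (Fin d)), (T⁻¹ ^ k) ((T ^ k) x) = x := by
    intro k
    induction k with
    | zero => intro x; rfl
    | succ m ih =>
      intro x
      rw [pow_succ T, pow_succ' (T⁻¹ : EuclideanSpace ℝ (Fin d) ≃L[ℝ] EuclideanSpace ℝ (Fin d))]
      show T⁻¹ ((T⁻¹ ^ m) ((T ^ m) (T x))) = x
      rw [ih (T x)]
      exact T.symm_apply_apply x
  -- B x k is the translate of Cs k
  have hBxk : ∀ x k, B x k = x +ᵥ Cs k := by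
    intro x k
    rw [hB]
    ext z
    constructor
    · rintro ⟨w, hw, rfl⟩
      refine Set.mem_vadd_set.mpr
        ⟨(T⁻¹ ^ k) (w - (T ^ k) x), ⟨w - (T ^ k) x, ?_, rfl⟩, ?_⟩
      · rw [Metric.mem_closedBall, dist_zero_right]
        rw [Metric.mem_closedBall] at hw
        rwa [← dist_eq_norm]
      · rw [map_sub, hinvpow k x, vadd_eq_add]
        abel
    · intro hz
      obtain ⟨zz, ⟨v, hv, rfl⟩, rfl⟩ := Set.mem_vadd_set.mp hz
      refine ⟨(T ^ k) x + v, ?_, ?_⟩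
      · rw [Metric.mem_closedBall, dist_eq_norm]
        have hvn : ‖v‖ ≤ δ := by rwa [Metric.mem_closedBall, dist_zero_right] at hv
        simpa [add_sub_cancel_left] using hvn
      · rw [map_add, hinvpow k x, vadd_eq_add]
  -- enlargement
  set Es : ℕ → Set (EuclideanSpace ℝ (Fin d)) := fun k => (3:ℝ) • Cs k with hEs
  have hE : ∀ (j k : ℕ), k ≤ j → ∀ x y : EuclideanSpace ℝ (Fin d),
      ((x +ᵥ Cs j) ∩ (y +ᵥ Cs k)).Nonempty → x +ᵥ Cs j ⊆ y +ᵥ Es k := by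
    rintro j k hkj x y ⟨z, hzj, hzk⟩ w hw
    obtain ⟨cz, hcz, hcz'⟩ := Set.mem_vadd_set.mp hzj
    obtain ⟨c'z, hc'z, hc'z'⟩ := Set.mem_vadd_set.mp hzk
    obtain ⟨cw, hcw, hcw'⟩ := Set.mem_vadd_set.mp hw
    refine Set.mem_vadd_set.mpr ⟨c'z + cw - cz, ?_, ?_⟩
    · exact DynDensity.sub3_mem_smul (hC_conv k) (hC_sym k) hc'z
        (hC_mono j k hkj hcw) (hC_mono j k hkj hcz)
    · rw [vadd_eq_add] at hcz' hc'z' hcw'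
      rw [vadd_eq_add]
      have hy : y = x + cz - c'z := by
        rw [← hcz'] at hc'z'
        exact eq_sub_of_add_eq hc'z'
      rw [hy, ← hcw']
      abel
  set K : ℝ≥0∞ :=
    ENNReal.ofReal ((3:ℝ) ^ (Module.finrank ℝ (EuclideanSpace ℝ (Fin d)))) with hKdef
  have hKtop : K ≠ ∞ := ENNReal.ofReal_ne_top
  have hK : ∀ k, volume (Es k) ≤ K * volume (Cs k) := by
    intro k
    rw [hEs]
    rw [MeasureTheory.Measure.addHaar_smul volume]
    apply le_of_eq
    congr 1
    rw [hKdef]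
    congr 1
    rw [abs_of_nonneg (by positivity)]
  -- the Vitali family
  let vit : VitaliFamily (volume : Measure (EuclideanSpace ℝ (Fin d))) :=
    DynDensity.vitaliFamily volume Cs Es (fun k => δ * lam ^ k)
      hC_closed hC_int hC0 hCr hr0 hE K hKtop hK
  filter_upwards [vit.ae_tendsto_measure_inter_div_of_measurableSet hS] with x hx hxS
  have h1 : Tendsto (fun k => B x k) atTop (vit.filterAt x) := by
    rw [VitaliFamily.tendsto_filterAt_iff]
    constructor
    · refine Eventually.of_forall fun k => ?_
      show B x k ∈ Set.range (fun k => x +ᵥ Cs k)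
      exact ⟨k, (hBxk x k).symm⟩
    · intro ε εpos
      have hev : ∀ᶠ k in atTop, δ * lam ^ k < ε := hr0.eventually (gt_mem_nhds εpos)
      filter_upwards [hev] with k hk
      rw [hBxk]
      refine (vadd_set_mono (hCr k)).trans ?_
      rw [vadd_closedBall, vadd_eq_add, add_zero]
      exact Metric.closedBall_subset_closedBall hk.le
  have h2 := hx.comp h1
  have h3 : S.indicator (1 : EuclideanSpace ℝ (Fin d) → ℝ≥0∞) x = 1 := by simp [hxS]
  rw [h3] at h2
  simpa only [Function.comp_def, Set.inter_comm S] using h2
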